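/- For all n ≥ 1 and i ≥ 0, Σ_{j≥0} t_{n,i,j} = P̃_{n, ⌊n/2⌋ - i}, where P̃_{n,k} is the number of permutations of [n] with k left peaks. -/

import Mathlib

open MvPolynomial Finset

/-- The derivation for the grammar `G = {w → wx, x → yz, y → xz, z → xy}` on `ℚ[w,x,y,z]`
(`w = X 0`, `x = X 1`, `y = X 2`, `z = X 3`). -/
noncomputable def Dg : Derivation ℚ (MvPolynomial (Fin 4) ℚ) (MvPolynomial (Fin 4) ℚ) :=
  MvPolynomial.mkDerivation ℚ ![X 0 * X 1, X 2 * X 3, X 1 * X 3, X 1 * X 2]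

/-- `tC n i j` is the coefficient `t_{n,i,j}` of `D^n(w)`:
for even `n`, the coefficient of `w x^(2i) y^j z^(n-2i-j)`;
for odd `n`, the coefficient of `w x^(2i+1) y^j z^(n-1-2i-j)`.
Coefficients with negative indices are `0`. -/
noncomputable def tC (n : ℕ) (i j : ℤ) : ℚ :=
  if 0 ≤ i ∧ 0 ≤ j then
    MvPolynomial.coeff
      (Finsupp.single 0 1
        + Finsupp.single 1 ((if Even n then 2*i else 2*i+1).toNat)
        + Finsupp.single 2 j.toNat
        + Finsupp.single 3 (((n:ℤ) - 2*i - j - if Even n then 0 else 1).toNat))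
      ((fun p => Dg p)^[n] (X 0))
  else 0

/-- The value of `π` at position `m` (1-indexed), with `π(0) = 0` and values in `{1,…,n}`. -/
def permVal (n : ℕ) (π : Equiv.Perm (Fin n)) (m : ℕ) : ℕ :=
  if h : 1 ≤ m ∧ m ≤ n then (π ⟨m-1, by omega⟩ : ℕ) + 1 else 0

/-- The number of left peaks of `π`: indices `i ∈ [n-1]` with `π(i-1) < π(i) > π(i+1)`,
where `π(0) = 0`. -/
def leftPeaks (n : ℕ) (π : Equiv.Perm (Fin n)) : ℕ :=
  ((Finset.Icc 1 (n-1)).filter fun m =>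
    permVal n π (m-1) < permVal n π m ∧ permVal n π (m+1) < permVal n π m).card

/-- `leftPeakCount n k = P̃_{n,k}` (with `ℤ`-valued index, zero for negative `k`): the number
of permutations of `[n]` with exactly `k` left peaks. -/
noncomputable def leftPeakCount (n : ℕ) (k : ℤ) : ℕ :=
  Nat.card {π : Equiv.Perm (Fin n) // (leftPeaks n π : ℤ) = k}


lemma coeff_pderiv {σ : Type*} [DecidableEq σ] (i : σ) (p : MvPolynomial σ ℚ) (m : σ →₀ ℕ) :
    coeff m (pderiv i p) = (m i + 1) * coeff (m + Finsupp.single i 1) p := by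
  induction p using MvPolynomial.induction_on' with
  | monomial s a =>
    rw [pderiv_monomial, coeff_monomial, coeff_monomial]
    by_cases hs : s = m + Finsupp.single i 1
    · subst hs
      rw [if_pos (add_tsub_cancel_right m (Finsupp.single i 1)), if_pos rfl]
      simp [mul_comm]
    · rw [if_neg hs, mul_zero]
      by_cases h0 : s i = 0
      · rw [ite_eq_right_iff]
        intro
        simp [h0]
      · rw [if_neg]
        intro hc
        exact hs (by rw [← hc, tsub_add_cancel_of_le]
                     rwa [Finsupp.single_le_iff, Nat.one_le_iff_ne_zero])
  | add p q hp hq => simp [hp, hq, mul_add]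

lemma Dg_eq (p : MvPolynomial (Fin 4) ℚ) :
    Dg p = X 0 * X 1 * pderiv 0 p + X 2 * X 3 * pderiv 1 p
      + X 1 * X 3 * pderiv 2 p + X 1 * X 2 * pderiv 3 p := by
  have : Dg = ((X 0 * X 1 : MvPolynomial (Fin 4) ℚ) • pderiv 0)
      + ((X 2 * X 3 : MvPolynomial (Fin 4) ℚ) • pderiv 1)
      + ((X 1 * X 3 : MvPolynomial (Fin 4) ℚ) • pderiv 2)
      + ((X 1 * X 2 : MvPolynomial (Fin 4) ℚ) • pderiv 3) := by
    apply derivation_ext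
    intro i
    fin_cases i <;>
      simp [Dg, mkDerivation_X, pderiv_X, Pi.single_apply] <;> rfl
  rw [this]
  simp only [Derivation.add_apply, Derivation.smul_apply, smul_eq_mul]

noncomputable def Ev (a b c : ℕ) : Fin 4 →₀ ℕ :=
  Finsupp.single 0 1 + Finsupp.single 1 a + Finsupp.single 2 b + Finsupp.single 3 c

lemma Ev_apply (a b c : ℕ) (i : Fin 4) : Ev a b c i = ![1, a, b, c] i := by
  fin_cases i <;> simp [Ev]

noncomputable def Qc (n a b c : ℕ) : ℚ :=
  coeff (Ev a b c) ((fun p => Dg p)^[n] (X 0))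

lemma coeff_XXpd (i j k : Fin 4) (p : MvPolynomial (Fin 4) ℚ) (m : Fin 4 →₀ ℕ) :
    coeff m (X i * X j * pderiv k p)
      = if Finsupp.single i 1 + Finsupp.single j 1 ≤ m then
          ((((m - (Finsupp.single i 1 + Finsupp.single j 1) : Fin 4 →₀ ℕ)) k + 1 : ℕ) : ℚ)
            * coeff (m - (Finsupp.single i 1 + Finsupp.single j 1) + Finsupp.single k 1) p
        else 0 := by
  have hX : (X i * X j : MvPolynomial (Fin 4) ℚ)
      = monomial (Finsupp.single i 1 + Finsupp.single j 1) 1 := by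
    rw [X, X, monomial_mul, one_mul]
  rw [hX, coeff_monomial_mul', _root_.coeff_pderiv]
  split_ifs <;> push_cast <;> ring

lemma Qc_succ (n a b c : ℕ) :
    Qc (n+1) a b c
      = (if 1 ≤ a then Qc n (a-1) b c else 0)
        + (if 1 ≤ b ∧ 1 ≤ c then ((a:ℚ)+1) * Qc n (a+1) (b-1) (c-1) else 0)
        + (if 1 ≤ a ∧ 1 ≤ c then ((b:ℚ)+1) * Qc n (a-1) (b+1) (c-1) else 0)
        + (if 1 ≤ a ∧ 1 ≤ b then ((c:ℚ)+1) * Qc n (a-1) (b-1) (c+1) else 0) := by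
  set p := (fun p => Dg p)^[n] (X 0 : MvPolynomial (Fin 4) ℚ) with hp
  have : Qc (n+1) a b c = coeff (Ev a b c) (Dg p) := by
    rw [Qc, Function.iterate_succ_apply']
  rw [this, Dg_eq, coeff_add, coeff_add, coeff_add, coeff_XXpd, coeff_XXpd, coeff_XXpd, coeff_XXpd]
  have pair_le : ∀ (i j : Fin 4), i ≠ j → ∀ m : Fin 4 →₀ ℕ,
      (Finsupp.single i 1 + Finsupp.single j 1 ≤ m ↔ 1 ≤ m i ∧ 1 ≤ m j) := by
    intro i j hij m
    rw [Finsupp.le_def]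
    constructor
    · intro h
      constructor
      · have := h i
        simpa [Finsupp.add_apply, Finsupp.single_apply, (Ne.symm hij)] using this
      · have := h j
        simpa [Finsupp.add_apply, Finsupp.single_apply, hij] using this
    · rintro ⟨h1, h2⟩ s
      simp only [Finsupp.add_apply, Finsupp.single_apply]
      split_ifs with hi hj hj
      · exact absurd (hi.trans hj.symm) hij
      · subst hi
        omega
      · subst hj
        omega
      · omega
  have fe : ∀ (f g : Fin 4 →₀ ℕ), f 0 = g 0 → f 1 = g 1 → f 2 = g 2 → f 3 = g 3 → f = g := by
    intro f g h0 h1 h2 h3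
    ext i
    fin_cases i <;> assumption
  congr 1
  congr 1
  congr 1
  · -- T1
    by_cases h : 1 ≤ a
    · rw [if_pos ((pair_le 0 1 (by decide) _).mpr (by simp [Ev_apply]; omega)), if_pos h]
      have hidx : Ev a b c - (Finsupp.single 0 1 + Finsupp.single 1 1) + Finsupp.single 0 1
          = Ev (a-1) b c := by
        apply fe <;> simp [Ev, Finsupp.single_apply] <;> omega
      have hval : ((Ev a b c - (Finsupp.single 0 1 + Finsupp.single 1 1) : Fin 4 →₀ ℕ)) 0 = 0 := by
        simp [Ev, Finsupp.single_apply]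
      rw [hidx, hval]
      norm_num [Qc]
      rfl
    · rw [if_neg, if_neg h]
      rw [pair_le 0 1 (by decide)]
      simp [Ev_apply]
      omega
  · -- T2
    by_cases h : 1 ≤ b ∧ 1 ≤ c
    · rw [if_pos ((pair_le 2 3 (by decide) _).mpr (by simp [Ev_apply]; omega)), if_pos h]
      have hidx : Ev a b c - (Finsupp.single 2 1 + Finsupp.single 3 1) + Finsupp.single 1 1
          = Ev (a+1) (b-1) (c-1) := by
        apply fe <;> simp [Ev, Finsupp.single_apply] <;> omega
      have hval : ((Ev a b c - (Finsupp.single 2 1 + Finsupp.single 3 1) : Fin 4 →₀ ℕ)) 1 = a := by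
        simp [Ev, Finsupp.single_apply]
      rw [hidx, hval]
      push_cast
      rw [Qc]
    · rw [if_neg, if_neg h]
      rw [pair_le 2 3 (by decide)]
      simp [Ev_apply]
      omega
  · -- T3
    by_cases h : 1 ≤ a ∧ 1 ≤ c
    · rw [if_pos ((pair_le 1 3 (by decide) _).mpr (by simp [Ev_apply]; omega)), if_pos h]
      have hidx : Ev a b c - (Finsupp.single 1 1 + Finsupp.single 3 1) + Finsupp.single 2 1
          = Ev (a-1) (b+1) (c-1) := by
        apply fe <;> simp [Ev, Finsupp.single_apply] <;> omega
      have hval : ((Ev a b c - (Finsupp.single 1 1 + Finsupp.single 3 1) : Fin 4 →₀ ℕ)) 2 = b := by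
        simp [Ev, Finsupp.single_apply]
      rw [hidx, hval]
      push_cast
      rw [Qc]
    · rw [if_neg, if_neg h]
      rw [pair_le 1 3 (by decide)]
      simp [Ev_apply]
      omega
  · -- T4
    by_cases h : 1 ≤ a ∧ 1 ≤ b
    · rw [if_pos ((pair_le 1 2 (by decide) _).mpr (by simp [Ev_apply]; omega)), if_pos h]
      have hidx : Ev a b c - (Finsupp.single 1 1 + Finsupp.single 2 1) + Finsupp.single 3 1
          = Ev (a-1) (b-1) (c+1) := by
        apply fe <;> simp [Ev, Finsupp.single_apply] <;> omega
      have hval : ((Ev a b c - (Finsupp.single 1 1 + Finsupp.single 2 1) : Fin 4 →₀ ℕ)) 3 = c := by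
        simp [Ev, Finsupp.single_apply]
      rw [hidx, hval]
      push_cast
      rw [Qc]
    · rw [if_neg, if_neg h]
      rw [pair_le 1 2 (by decide)]
      simp [Ev_apply]
      omega

lemma Qc_zero (a b c : ℕ) : Qc 0 a b c = if a = 0 ∧ b = 0 ∧ c = 0 then 1 else 0 := by
  rw [Qc]
  simp only [Function.iterate_zero, id_eq]
  rw [coeff_X']
  by_cases h : a = 0 ∧ b = 0 ∧ c = 0
  · obtain ⟨rfl, rfl, rfl⟩ := h
    rw [if_pos, if_pos ⟨rfl, rfl, rfl⟩]
    simp [Ev]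
  · rw [if_neg, if_neg h]
    intro hc
    apply h
    have h1 := congrArg (fun f : Fin 4 →₀ ℕ => f 1) hc
    have h2 := congrArg (fun f : Fin 4 →₀ ℕ => f 2) hc
    have h3 := congrArg (fun f : Fin 4 →₀ ℕ => f 3) hc
    simp [Ev_apply, Finsupp.single_apply] at h1 h2 h3
    exact ⟨h1.symm, h2.symm, h3.symm⟩

lemma Qc_vanish (n : ℕ) : ∀ a b c : ℕ, a + b + c ≠ n → Qc n a b c = 0 := by
  induction n with
  | zero =>
    intro a b c h
    rw [Qc_zero, if_neg (by omega)]
  | succ n ih =>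
    intro a b c h
    rw [Qc_succ]
    have h1 : (if 1 ≤ a then Qc n (a-1) b c else 0) = 0 := by
      split_ifs with ha
      · exact ih _ _ _ (by omega)
      · rfl
    have h2 : (if 1 ≤ b ∧ 1 ≤ c then ((a:ℚ)+1) * Qc n (a+1) (b-1) (c-1) else 0) = 0 := by
      split_ifs with hbc
      · rw [ih _ _ _ (by omega), mul_zero]
      · rfl
    have h3 : (if 1 ≤ a ∧ 1 ≤ c then ((b:ℚ)+1) * Qc n (a-1) (b+1) (c-1) else 0) = 0 := by
      split_ifs with hac
      · rw [ih _ _ _ (by omega), mul_zero]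
      · rfl
    have h4 : (if 1 ≤ a ∧ 1 ≤ b then ((c:ℚ)+1) * Qc n (a-1) (b-1) (c+1) else 0) = 0 := by
      split_ifs with hab
      · rw [ih _ _ _ (by omega), mul_zero]
      · rfl
    rw [h1, h2, h3, h4]
    ring

noncomputable def Sv (n a : ℕ) : ℚ := ∑ b ∈ Finset.range (n+1), Qc n a b (n - a - b)

lemma Sv_zero (a : ℕ) : Sv 0 a = if a = 0 then 1 else 0 := by
  rw [Sv, show (0:ℕ)+1 = 1 from rfl, Finset.sum_range_one, Qc_zero]
  split_ifs with h1 h2 h2 <;> first | rfl | omega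

lemma Sv_vanish (n a : ℕ) (h : n < a) : Sv n a = 0 := by
  rw [Sv]
  refine Finset.sum_eq_zero fun b _ => Qc_vanish n _ _ _ (by omega)

lemma tC_eq_Qc (n i j : ℕ) :
    tC n (i:ℤ) (j:ℤ)
      = Qc n (if Even n then 2*i else 2*i+1) j (n - (if Even n then 2*i else 2*i+1) - j) := by
  rw [tC, if_pos ⟨by positivity, by positivity⟩, Qc]
  congr 1
  by_cases hn : Even n
  · rw [if_pos hn, if_pos hn, if_pos hn, Ev]
    have e1 : ((2*(i:ℤ))).toNat = 2*i := by omega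
    have e2 : ((j:ℤ)).toNat = j := by omega
    have e3 : ((n:ℤ) - 2*(i:ℤ) - (j:ℤ) - 0).toNat = n - 2*i - j := by omega
    rw [e1, e2, e3]
  · rw [if_neg hn, if_neg hn, if_neg hn, Ev]
    have e1 : ((2*(i:ℤ)+1)).toNat = 2*i+1 := by omega
    have e2 : ((j:ℤ)).toNat = j := by omega
    have e3 : ((n:ℤ) - 2*(i:ℤ) - (j:ℤ) - 1).toNat = n - (2*i+1) - j := by omega
    rw [e1, e2, e3]

lemma sum_tC_eq_Sv (n i : ℕ) :
    ∑ j ∈ Finset.range (n+1), tC n (i:ℤ) (j:ℤ)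
      = Sv n (if Even n then 2*i else 2*i+1) := by
  rw [Sv]
  refine Finset.sum_congr rfl fun j _ => ?_
  rw [tC_eq_Qc]

lemma Sv_succ (n a : ℕ) :
    Sv (n+1) a = (if 1 ≤ a then ((n:ℚ) - a + 2) * Sv n (a-1) else 0)
      + ((a:ℚ)+1) * Sv n (a+1) := by
  have h1 : ∑ b ∈ range (n+2), (if 1 ≤ a then Qc n (a-1) b (n+1-a-b) else 0)
      = if 1 ≤ a then Sv n (a-1) else 0 := by
    by_cases ha : 1 ≤ a
    · simp only [if_pos ha]
      rw [Finset.sum_range_succ, Qc_vanish n (a-1) (n+1) _ (by omega), add_zero]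
      refine Finset.sum_congr rfl fun b _ => ?_
      congr 1
      omega
    · simp [ha]
  have h2 : ∑ b ∈ range (n+2),
        (if 1 ≤ b ∧ 1 ≤ n+1-a-b then ((a:ℚ)+1) * Qc n (a+1) (b-1) (n+1-a-b-1) else 0)
      = ((a:ℚ)+1) * Sv n (a+1) := by
    have step : ∀ b ∈ range (n+2),
        (if 1 ≤ b ∧ 1 ≤ n+1-a-b then ((a:ℚ)+1) * Qc n (a+1) (b-1) (n+1-a-b-1) else 0)
          = if 1 ≤ b then ((a:ℚ)+1) * Qc n (a+1) (b-1) (n-(a+1)-(b-1)) else 0 := by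
      intro b _
      by_cases hb : 1 ≤ b
      · by_cases hc : 1 ≤ n+1-a-b
        · rw [if_pos ⟨hb, hc⟩, if_pos hb]
          congr 2
          omega
        · rw [if_neg (by tauto), if_pos hb, Qc_vanish n (a+1) (b-1) _ (by omega), mul_zero]
      · rw [if_neg (by tauto), if_neg hb]
    rw [Finset.sum_congr rfl step, Finset.sum_range_succ', if_neg (by omega), add_zero]
    have simp1 : ∀ k ∈ range (n+1),
        (if 1 ≤ k+1 then ((a:ℚ)+1) * Qc n (a+1) (k+1-1) (n-(a+1)-(k+1-1)) else 0)
          = ((a:ℚ)+1) * Qc n (a+1) k (n-(a+1)-k) := by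
      intro k _
      rw [if_pos (by omega)]
      norm_num
    rw [Finset.sum_congr rfl simp1, ← Finset.mul_sum]
    rfl
  have h3 : ∑ b ∈ range (n+2),
        (if 1 ≤ a ∧ 1 ≤ n+1-a-b then ((b:ℚ)+1) * Qc n (a-1) (b+1) (n+1-a-b-1) else 0)
      = if 1 ≤ a then
          ∑ b ∈ range (n+1), (b:ℚ) * Qc n (a-1) b (n-(a-1)-b) else 0 := by
    by_cases ha : 1 ≤ a
    · rw [if_pos ha]
      have step : ∀ b ∈ range (n+2),
          (if 1 ≤ a ∧ 1 ≤ n+1-a-b then ((b:ℚ)+1) * Qc n (a-1) (b+1) (n+1-a-b-1) else 0)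
            = ((b+1 : ℕ):ℚ) * Qc n (a-1) (b+1) (n-(a-1)-(b+1)) := by
        intro b _
        by_cases hc : 1 ≤ n+1-a-b
        · rw [if_pos ⟨ha, hc⟩]
          push_cast
          congr 2
          omega
        · rw [if_neg (by tauto), Qc_vanish n (a-1) (b+1) _ (by omega), mul_zero]
      rw [Finset.sum_congr rfl step]
      have expand : ∑ b ∈ range (n+3), ((b:ℕ):ℚ) * Qc n (a-1) b (n-(a-1)-b)
          = ∑ b ∈ range (n+2), ((b+1 : ℕ):ℚ) * Qc n (a-1) (b+1) (n-(a-1)-(b+1)) := by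
        rw [Finset.sum_range_succ']
        norm_num
      rw [← expand, Finset.sum_range_succ, Finset.sum_range_succ,
        Qc_vanish n (a-1) (n+1) _ (by omega), Qc_vanish n (a-1) (n+2) _ (by omega)]
      simp
    · simp [ha]
  have h4 : ∑ b ∈ range (n+2),
        (if 1 ≤ a ∧ 1 ≤ b then (((n+1-a-b : ℕ):ℚ)+1) * Qc n (a-1) (b-1) (n+1-a-b+1) else 0)
      = if 1 ≤ a then
          ∑ b ∈ range (n+1), ((n:ℚ)-a+1-b) * Qc n (a-1) b (n-(a-1)-b) else 0 := by
    by_cases ha : 1 ≤ a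
    · rw [if_pos ha]
      have step : ∀ b ∈ range (n+2),
          (if 1 ≤ a ∧ 1 ≤ b then (((n+1-a-b : ℕ):ℚ)+1) * Qc n (a-1) (b-1) (n+1-a-b+1) else 0)
            = if 1 ≤ b then ((n:ℚ)-a+1-(b-1:ℕ)) * Qc n (a-1) (b-1) (n-(a-1)-(b-1)) else 0 := by
        intro b _
        by_cases hb : 1 ≤ b
        · rw [if_pos ⟨ha, hb⟩, if_pos hb]
          by_cases hab : a + b ≤ n+1
          · have hz : n+1-a-b+1 = n-(a-1)-(b-1) := by omega
            have hcoef : ((n+1-a-b : ℕ):ℚ) + 1 = (n:ℚ)-a+1-(b-1:ℕ) := by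
              have h' : (n+1-a-b : ℕ) + (a : ℕ) + b = n + 1 := by omega
              have h'' : ((b:ℕ)-1 : ℕ) + 1 = b := by omega
              have := congrArg (fun t : ℕ => (t:ℚ)) h'
              have := congrArg (fun t : ℕ => (t:ℚ)) h''
              push_cast at *
              linarith
            rw [hz, hcoef]
          · by_cases hab2 : a + b = n+2
            · rw [Qc_vanish n (a-1) (b-1) _ (by omega)]
              have hz0 : n-(a-1)-(b-1) = 0 := by omega
              have hcoef0 : (n:ℚ)-a+1-(b-1:ℕ) = 0 := by
                have h' : ((b:ℕ)-1 : ℕ) + 1 = b := by omega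
                have := congrArg (fun t : ℕ => (t:ℚ)) h'
                have h2' : (a:ℚ) + b = (n:ℚ) + 2 := by exact_mod_cast congrArg (fun t : ℕ => (t:ℚ)) hab2
                push_cast at *
                linarith
              rw [hz0, hcoef0]
              ring
            · rw [Qc_vanish n (a-1) (b-1) _ (by omega), Qc_vanish n (a-1) (b-1) _ (by omega)]
              ring
        · rw [if_neg (by tauto), if_neg hb]
      rw [Finset.sum_congr rfl step, Finset.sum_range_succ', if_neg (by omega), add_zero]
      refine Finset.sum_congr rfl fun b _ => ?_
      rw [if_pos (by omega)]
      norm_num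
    · simp [ha]
  have expand : Sv (n+1) a = (∑ b ∈ range (n+2), (if 1 ≤ a then Qc n (a-1) b (n+1-a-b) else 0))
      + (∑ b ∈ range (n+2),
          (if 1 ≤ b ∧ 1 ≤ n+1-a-b then ((a:ℚ)+1) * Qc n (a+1) (b-1) (n+1-a-b-1) else 0))
      + (∑ b ∈ range (n+2),
          (if 1 ≤ a ∧ 1 ≤ n+1-a-b then ((b:ℚ)+1) * Qc n (a-1) (b+1) (n+1-a-b-1) else 0))
      + (∑ b ∈ range (n+2),
          (if 1 ≤ a ∧ 1 ≤ b then (((n+1-a-b : ℕ):ℚ)+1) * Qc n (a-1) (b-1) (n+1-a-b+1) else 0)) := by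
    rw [Sv, ← Finset.sum_add_distrib, ← Finset.sum_add_distrib, ← Finset.sum_add_distrib]
    refine Finset.sum_congr rfl fun b _ => ?_
    rw [show n+1+1 = n+2 from rfl] at *
    rw [Qc_succ n a b (n+1-a-b)]
  rw [expand, h1, h2, h3, h4]
  by_cases ha : 1 ≤ a
  · rw [if_pos ha, if_pos ha, if_pos ha, if_pos ha]
    have : ∑ b ∈ range (n+1), (b:ℚ) * Qc n (a-1) b (n-(a-1)-b)
        + ∑ b ∈ range (n+1), ((n:ℚ)-a+1-b) * Qc n (a-1) b (n-(a-1)-b)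
        = ((n:ℚ)-a+1) * Sv n (a-1) := by
      rw [← Finset.sum_add_distrib, Sv, Finset.mul_sum]
      refine Finset.sum_congr rfl fun b _ => ?_
      ring
    linarith [this]
  · rw [if_neg ha, if_neg ha, if_neg ha, if_neg ha]
    ring

def ins {n : ℕ} (σ : Equiv.Perm (Fin n)) (p : Fin (n+1)) : Equiv.Perm (Fin (n+1)) :=
  (finSuccEquiv' p).trans (σ.optionCongr.trans finSuccEquivLast.symm)

lemma permVal_le (n : ℕ) (π : Equiv.Perm (Fin n)) (m : ℕ) : permVal n π m ≤ n := by
  rw [permVal]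
  split_ifs with h
  · exact (π ⟨m-1, by omega⟩).isLt
  · omega

lemma permVal_ins (n : ℕ) (σ : Equiv.Perm (Fin n)) (p : Fin (n+1)) (x : ℕ) :
    permVal (n+1) (ins σ p) x
      = if x = (p:ℕ)+1 then n+1
        else if x ≤ (p:ℕ) then permVal n σ x else permVal n σ (x-1) := by
  have hP : (p:ℕ) ≤ n := Nat.lt_succ_iff.mp p.isLt
  by_cases hx : x = (p:ℕ)+1
  · subst hx
    rw [if_pos rfl, permVal, dif_pos ⟨by omega, by omega⟩]
    have hfin : (⟨(p:ℕ)+1-1, by omega⟩ : Fin (n+1)) = p := by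
      apply Fin.ext
      simp
    rw [hfin]
    have : ins σ p p = Fin.last n := by
      simp [ins, finSuccEquiv'_at]
    rw [this]
    simp
  · rw [if_neg hx]
    by_cases hle : x ≤ (p:ℕ)
    · rw [if_pos hle]
      by_cases hx1 : 1 ≤ x
      · -- 1 ≤ x ≤ P, so x-1 < P ≤ n
        have hxn : x ≤ n := le_trans hle hP
        rw [permVal, dif_pos ⟨hx1, by omega⟩, permVal, dif_pos ⟨hx1, hxn⟩]
        have hj : x - 1 < n := by omega
        have hcast : (⟨x-1, by omega⟩ : Fin (n+1)) = Fin.castSucc ⟨x-1, hj⟩ := rfl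
        have hlt : Fin.castSucc (⟨x-1, hj⟩ : Fin n) < p := by
          rw [Fin.lt_def]
          simp only [Fin.coe_castSucc]
          omega
        rw [hcast]
        have : ins σ p (Fin.castSucc ⟨x-1, hj⟩) = Fin.castSucc (σ ⟨x-1, hj⟩) := by
          have h1 : p.succAbove ⟨x-1, hj⟩ = Fin.castSucc ⟨x-1, hj⟩ :=
            Fin.succAbove_of_castSucc_lt p _ hlt
          rw [← h1]
          simp [ins, finSuccEquiv'_succAbove]
        rw [this]
        simp
      · have hx0 : x = 0 := by omega
        subst hx0
        rw [permVal, dif_neg (by omega), permVal, dif_neg (by omega)]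
    · rw [if_neg hle]
      push_neg at hle
      by_cases hxr : x ≤ n+1
      · -- P+2 ≤ x ≤ n+1
        have hx2 : (p:ℕ)+2 ≤ x := by omega
        rw [permVal, dif_pos ⟨by omega, hxr⟩, permVal, dif_pos ⟨by omega, by omega⟩]
        have hj : x - 2 < n := by omega
        have hcast : (⟨x-1, by omega⟩ : Fin (n+1)) = Fin.succ ⟨x-2, hj⟩ := by
          apply Fin.ext
          simp
          omega
        have hge : p ≤ Fin.castSucc ⟨x-2, hj⟩ := by
          rw [Fin.le_def]
          simp only [Fin.coe_castSucc]
          omega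
        rw [hcast]
        have : ins σ p (Fin.succ ⟨x-2, hj⟩) = Fin.castSucc (σ ⟨x-2, hj⟩) := by
          have h1 : p.succAbove ⟨x-2, hj⟩ = Fin.succ ⟨x-2, hj⟩ :=
            Fin.succAbove_of_le_castSucc p _ hge
          rw [← h1]
          simp [ins, finSuccEquiv'_succAbove]
        rw [this]
        have harg : (⟨x-1-1, by omega⟩ : Fin n) = ⟨x-2, hj⟩ := by
          apply Fin.ext
          simp only []
          omega
        rw [harg]
        simp
      · rw [permVal, dif_neg (by omega), permVal, dif_neg (by omega)]

def pkSet (n : ℕ) (π : Equiv.Perm (Fin n)) : Finset ℕ :=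
  (Finset.Icc 1 (n-1)).filter fun m =>
    permVal n π (m-1) < permVal n π m ∧ permVal n π (m+1) < permVal n π m

lemma leftPeaks_card (n : ℕ) (π : Equiv.Perm (Fin n)) : leftPeaks n π = (pkSet n π).card := rfl

lemma mem_pkSet (n : ℕ) (π : Equiv.Perm (Fin n)) (m : ℕ) :
    m ∈ pkSet n π ↔ (1 ≤ m ∧ m ≤ n-1)
      ∧ permVal n π (m-1) < permVal n π m ∧ permVal n π (m+1) < permVal n π m := by
  simp [pkSet, Finset.mem_filter, Finset.mem_Icc, and_assoc]

lemma mem_pk_ins (n : ℕ) (hn : 1 ≤ n) (σ : Equiv.Perm (Fin n)) (p : Fin (n+1)) (m : ℕ) :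
    m ∈ pkSet (n+1) (ins σ p) ↔
      (m ∈ pkSet n σ ∧ m < (p:ℕ))
      ∨ (m - 1 ∈ pkSet n σ ∧ (p:ℕ)+1 < m - 1)
      ∨ ((p:ℕ)+1 ≤ n ∧ m = (p:ℕ)+1) := by
  have hP : (p:ℕ) ≤ n := Nat.lt_succ_iff.mp p.isLt
  have B1 := permVal_le n σ (m-1-1)
  have B2 := permVal_le n σ (m-1)
  have B3 := permVal_le n σ m
  have B4 := permVal_le n σ (m+1)
  rw [mem_pkSet, mem_pkSet, mem_pkSet, permVal_ins, permVal_ins, permVal_ins]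
  rcases Nat.eq_zero_or_pos m with rfl | hm
  · -- m = 0 : both sides false
    apply iff_of_false
    · rintro ⟨⟨h1, _⟩, _⟩
      omega
    · rintro (⟨⟨⟨h1, _⟩, _⟩, _⟩ | ⟨_, hlt⟩ | ⟨_, heq⟩) <;> omega
  · by_cases hc1 : m + 1 ≤ (p:ℕ)
    · -- region (i)
      rw [if_neg (by omega), if_pos (by omega), if_neg (by omega), if_pos (by omega),
        if_neg (by omega), if_pos (by omega)]
      constructor
      · rintro ⟨hb, hpk1, hpk2⟩
        exact Or.inl ⟨⟨⟨by omega, by omega⟩, hpk1, hpk2⟩, by omega⟩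
      · rintro (⟨⟨hb, hpk1, hpk2⟩, hlt⟩ | ⟨⟨hb, _, _⟩, hlt⟩ | ⟨_, heq⟩)
        · exact ⟨⟨by omega, by omega⟩, hpk1, hpk2⟩
        · omega
        · omega
    · by_cases hc2 : m = (p:ℕ)
      · -- region (ii): v'(m+1) = n+1, cannot be a peak
        rw [if_neg (by omega), if_pos (by omega), if_neg (by omega), if_pos (by omega),
          if_pos (by omega)]
        apply iff_of_false
        · rintro ⟨hb, _, hpk2⟩
          omega
        · rintro (⟨_, hlt⟩ | ⟨_, hlt⟩ | ⟨_, heq⟩) <;> omega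
      · by_cases hc3 : m = (p:ℕ)+1
        · -- region (iii): the new max position
          rw [if_neg (by omega), if_pos (by omega), if_pos (by omega),
            if_neg (by omega), if_neg (by omega)]
          rw [show m+1-1 = m from by omega]
          constructor
          · rintro ⟨hb, _, _⟩
            exact Or.inr (Or.inr ⟨by omega, hc3⟩)
          · rintro (⟨_, hlt⟩ | ⟨_, hlt⟩ | ⟨hle, _⟩)
            · omega
            · omega
            · exact ⟨⟨by omega, by omega⟩, by omega, by omega⟩
        · by_cases hc4 : m = (p:ℕ)+2
          · -- region (iv): left neighbour is the max
            rw [if_pos (by omega), if_neg (by omega), if_neg (by omega),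
              if_neg (by omega), if_neg (by omega)]
            apply iff_of_false
            · rintro ⟨hb, hpk1, _⟩
              omega
            · rintro (⟨_, hlt⟩ | ⟨_, hlt⟩ | ⟨_, heq⟩) <;> omega
          · -- region (v): m ≥ P+3
            have hc5 : (p:ℕ)+3 ≤ m := by omega
            rw [if_neg (by omega), if_neg (by omega), if_neg (by omega),
              if_neg (by omega), if_neg (by omega), if_neg (by omega)]
            rw [show m+1-1 = m from by omega]
            constructor
            · rintro ⟨hb, hpk1, hpk2⟩
              refine Or.inr (Or.inl ⟨⟨⟨by omega, by omega⟩, ?_, ?_⟩, by omega⟩)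
              · exact hpk1
              · rw [show m-1+1 = m from by omega]
                exact hpk2
            · rintro (⟨_, hlt⟩ | ⟨⟨hb, hpk1, hpk2⟩, hlt⟩ | ⟨_, heq⟩)
              · omega
              · rw [show m-1+1 = m from by omega] at hpk2
                exact ⟨⟨by omega, by omega⟩, hpk1, hpk2⟩
              · omega

lemma pk_nonadj (n : ℕ) (σ : Equiv.Perm (Fin n)) (q : ℕ)
    (h1 : q ∈ pkSet n σ) (h2 : q + 1 ∈ pkSet n σ) : False := by
  rw [mem_pkSet] at h1 h2
  have e : q + 1 - 1 = q := by omega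
  rw [e] at h2
  omega

lemma pk_bounds (n : ℕ) (σ : Equiv.Perm (Fin n)) (q : ℕ) (h : q ∈ pkSet n σ) :
    1 ≤ q ∧ q ≤ n - 1 := ((mem_pkSet n σ q).mp h).1

def keeps (n : ℕ) (σ : Equiv.Perm (Fin n)) (P : ℕ) : Prop :=
  P = n ∨ P ∈ pkSet n σ ∨ P + 1 ∈ pkSet n σ

instance (n : ℕ) (σ : Equiv.Perm (Fin n)) (P : ℕ) : Decidable (keeps n σ P) := by
  unfold keeps; infer_instance

lemma leftPeaks_ins (n : ℕ) (hn : 1 ≤ n) (σ : Equiv.Perm (Fin n)) (p : Fin (n+1)) :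
    leftPeaks (n+1) (ins σ p) = if keeps n σ (p:ℕ) then leftPeaks n σ else leftPeaks n σ + 1 := by
  have hP : (p:ℕ) ≤ n := Nat.lt_succ_iff.mp p.isLt
  set P := (p:ℕ) with hPdef
  -- decompose the new peak set
  have hdecomp : pkSet (n+1) (ins σ p)
      = ((pkSet n σ).filter (· < P))
        ∪ (((pkSet n σ).filter (fun q => P + 1 < q)).image (· + 1))
        ∪ (if P + 1 ≤ n then {P+1} else ∅) := by
    ext m
    rw [mem_pk_ins n hn σ p m]
    simp only [Finset.mem_union, Finset.mem_image, Finset.mem_filter]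
    constructor
    · rintro (⟨h1, h2⟩ | ⟨h1, h2⟩ | ⟨h1, h2⟩)
      · exact Or.inl (Or.inl ⟨h1, h2⟩)
      · refine Or.inl (Or.inr ⟨m-1, ⟨h1, h2⟩, ?_⟩)
        have := pk_bounds n σ _ h1
        omega
      · refine Or.inr ?_
        rw [if_pos h1]
        simp [h2, ← hPdef]
    · rintro ((⟨h1, h2⟩ | ⟨q, ⟨hq1, hq2⟩, rfl⟩) | h3)
      · exact Or.inl ⟨h1, h2⟩
      · refine Or.inr (Or.inl ⟨?_, ?_⟩) <;> simp [Nat.add_sub_cancel, hq1, hq2, ← hPdef]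
      · split_ifs at h3 with hc
        · simp only [Finset.mem_singleton] at h3
          exact Or.inr (Or.inr ⟨hc, h3⟩)
        · simp at h3
  -- cardinalities
  have c2 : (((pkSet n σ).filter (fun q => P + 1 < q)).image (· + 1)).card
      = ((pkSet n σ).filter (fun q => P + 1 < q)).card :=
    Finset.card_image_of_injective _ (add_left_injective 1)
  have hd1 : Disjoint ((pkSet n σ).filter (· < P))
      (((pkSet n σ).filter (fun q => P + 1 < q)).image (· + 1)) := by
    rw [Finset.disjoint_left]
    intro a ha hb
    simp only [Finset.mem_filter, Finset.mem_image] at ha hb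
    obtain ⟨q, ⟨_, hq⟩, rfl⟩ := hb
    omega
  have hd2 : Disjoint (((pkSet n σ).filter (· < P))
      ∪ (((pkSet n σ).filter (fun q => P + 1 < q)).image (· + 1)))
      (if P + 1 ≤ n then ({P+1} : Finset ℕ) else ∅) := by
    rw [Finset.disjoint_right]
    intro a ha hb
    split_ifs at ha with hc
    · simp only [Finset.mem_singleton] at ha
      subst ha
      simp only [Finset.mem_union, Finset.mem_filter, Finset.mem_image] at hb
      rcases hb with ⟨_, h⟩ | ⟨q, ⟨hq1, hq2⟩, hq3⟩
      · omega
      · omega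
    · simp at ha
  have hcard : leftPeaks (n+1) (ins σ p)
      = ((pkSet n σ).filter (· < P)).card
        + ((pkSet n σ).filter (fun q => P + 1 < q)).card
        + (if P + 1 ≤ n then 1 else 0) := by
    rw [leftPeaks_card, hdecomp, Finset.card_union_of_disjoint hd2, Finset.card_union_of_disjoint hd1, c2]
    congr 1
    split_ifs <;> simp
  -- partition of the old peak set
  have hpart : leftPeaks n σ = ((pkSet n σ).filter (· < P)).card
      + ((pkSet n σ).filter (fun q => P + 1 < q)).card
      + (if P ∈ pkSet n σ then 1 else 0) + (if P + 1 ∈ pkSet n σ then 1 else 0) := by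
    have hsplit : pkSet n σ = ((pkSet n σ).filter (· < P))
        ∪ ((pkSet n σ).filter (fun q => P + 1 < q))
        ∪ ((pkSet n σ).filter (fun q => q = P))
        ∪ ((pkSet n σ).filter (fun q => q = P + 1)) := by
      ext q
      simp only [Finset.mem_union, Finset.mem_filter]
      constructor
      · intro hq
        by_cases h1 : q < P
        · exact Or.inl (Or.inl (Or.inl ⟨hq, h1⟩))
        · by_cases h2 : P + 1 < q
          · exact Or.inl (Or.inl (Or.inr ⟨hq, h2⟩))
          · by_cases h3 : q = P
            · exact Or.inl (Or.inr ⟨hq, h3⟩)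
            · exact Or.inr ⟨hq, by omega⟩
      · rintro ((( ⟨h,_⟩ | ⟨h,_⟩) | ⟨h,_⟩) | ⟨h,_⟩) <;> exact h
    have e3 : ((pkSet n σ).filter (fun q => q = P)).card = if P ∈ pkSet n σ then 1 else 0 := by
      rw [Finset.filter_eq']
      split_ifs <;> simp
    have e4 : ((pkSet n σ).filter (fun q => q = P + 1)).card
        = if P + 1 ∈ pkSet n σ then 1 else 0 := by
      rw [Finset.filter_eq']
      split_ifs <;> simp
    rw [leftPeaks_card]
    conv_lhs => rw [hsplit]
    rw [Finset.card_union_of_disjoint, Finset.card_union_of_disjoint, Finset.card_union_of_disjoint,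
      e3, e4]
    · rw [Finset.disjoint_left]
      intro a ha hb
      simp only [Finset.mem_filter] at ha hb
      omega
    · rw [Finset.disjoint_left]
      intro a ha hb
      simp only [Finset.mem_union, Finset.mem_filter] at ha hb
      rcases ha with ⟨_, h⟩ | ⟨_, h⟩ <;> omega
    · rw [Finset.disjoint_left]
      intro a ha hb
      simp only [Finset.mem_union, Finset.mem_filter] at ha hb
      rcases ha with (⟨_, h⟩ | ⟨_, h⟩) | ⟨_, h⟩ <;> omega
  -- case analysis
  by_cases hk : keeps n σ P
  · rw [if_pos hk]
    rcases hk with hkn | hk1 | hk2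
    · have hf : (if P ∈ pkSet n σ then 1 else 0) = 0 := by
        split_ifs with h
        · exact absurd (pk_bounds n σ _ h).2 (by omega)
        · rfl
      have hf2 : (if P + 1 ∈ pkSet n σ then 1 else 0) = 0 := by
        split_ifs with h
        · exact absurd (pk_bounds n σ _ h).2 (by omega)
        · rfl
      rw [hcard, hpart, hf, hf2, if_neg (by omega)]
    · have h1 := pk_bounds n σ _ hk1
      have hf2 : (if P + 1 ∈ pkSet n σ then 1 else 0) = 0 := by
        split_ifs with h
        · exact absurd (pk_nonadj n σ P hk1 h) not_false
        · rfl
      rw [hcard, hpart, if_pos hk1, hf2, if_pos (by omega)]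
    · have h1 := pk_bounds n σ _ hk2
      have hf : (if P ∈ pkSet n σ then 1 else 0) = 0 := by
        split_ifs with h
        · exact absurd (pk_nonadj n σ P h hk2) not_false
        · rfl
      rw [hcard, hpart, hf, if_pos hk2, if_pos (by omega)]
  · rw [if_neg hk]
    rw [keeps, not_or, not_or] at hk
    obtain ⟨hk1, hk2, hk3⟩ := hk
    rw [hcard, hpart, if_neg hk2, if_neg hk3, if_pos (by omega)]

lemma card_keeps (n : ℕ) (hn : 1 ≤ n) (σ : Equiv.Perm (Fin n)) :
    ((Finset.univ : Finset (Fin (n+1))).filter fun p : Fin (n+1) => keeps n σ (p:ℕ)).card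
      = 2 * leftPeaks n σ + 1 := by
  set B : Finset ℕ := insert n (pkSet n σ ∪ (pkSet n σ).image (· - 1)) with hB
  have hcardB : B.card = 2 * leftPeaks n σ + 1 := by
    rw [hB, Finset.card_insert_of_notMem, Finset.card_union_of_disjoint,
      Finset.card_image_of_injOn]
    · rw [leftPeaks_card]; ring
    · intro a ha b hb hab
      have h1 := pk_bounds n σ a (Finset.mem_coe.mp ha)
      have h2 := pk_bounds n σ b (Finset.mem_coe.mp hb)
      dsimp only at hab
      omega
    · rw [Finset.disjoint_left]
      intro a ha hb
      simp only [Finset.mem_image] at hb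
      obtain ⟨q, hq, rfl⟩ := hb
      have h1 := pk_bounds n σ q hq
      have : q - 1 + 1 = q := by omega
      exact pk_nonadj n σ (q-1) ha (by rwa [this])
    · simp only [Finset.mem_union, Finset.mem_image]
      rintro (h | ⟨q, hq, hq2⟩)
      · have := pk_bounds n σ n h
        omega
      · have := pk_bounds n σ q hq
        omega
  rw [← hcardB]
  refine Finset.card_bij (fun p _ => (p:ℕ)) ?_ ?_ ?_
  · intro p hp
    simp only [Finset.mem_filter] at hp
    rcases hp.2 with h | h | h
    · simp [hB, h]
    · simp only [hB, Finset.mem_insert, Finset.mem_union]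
      exact Or.inr (Or.inl h)
    · simp only [hB, Finset.mem_insert, Finset.mem_union, Finset.mem_image]
      exact Or.inr (Or.inr ⟨(p:ℕ)+1, h, by omega⟩)
  · intro p _ q _ h
    exact Fin.ext h
  · intro b hb
    simp only [hB, Finset.mem_insert, Finset.mem_union, Finset.mem_image] at hb
    have hble : b ≤ n := by
      rcases hb with rfl | h | ⟨q, hq, hq2⟩
      · omega
      · have := pk_bounds n σ b h; omega
      · have := pk_bounds n σ q hq; omega
    refine ⟨⟨b, by omega⟩, ?_, rfl⟩
    simp only [Finset.mem_filter, Finset.mem_univ, true_and]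
    rcases hb with rfl | h | ⟨q, hq, hq2⟩
    · exact Or.inl rfl
    · exact Or.inr (Or.inl h)
    · refine Or.inr (Or.inr ?_)
      have := pk_bounds n σ q hq
      have e : b + 1 = q := by omega
      rwa [e]

lemma two_lpk_le (n : ℕ) (hn : 1 ≤ n) (σ : Equiv.Perm (Fin n)) : 2 * leftPeaks n σ ≤ n := by
  have h := card_keeps n hn σ
  have h2 := Finset.card_filter_le (Finset.univ : Finset (Fin (n+1)))
    (fun p : Fin (n+1) => keeps n σ (p:ℕ))
  rw [h] at h2
  simp only [Finset.card_univ, Fintype.card_fin] at h2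
  omega

lemma count_p (n : ℕ) (hn : 1 ≤ n) (σ : Equiv.Perm (Fin n)) (k : ℤ) :
    ((Finset.univ : Finset (Fin (n+1))).filter fun p => (leftPeaks (n+1) (ins σ p) : ℤ) = k).card
      = if (leftPeaks n σ : ℤ) = k then 2 * leftPeaks n σ + 1
        else if (leftPeaks n σ : ℤ) = k - 1 then n - 2 * leftPeaks n σ else 0 := by
  by_cases h1 : (leftPeaks n σ : ℤ) = k
  · rw [if_pos h1, ← card_keeps n hn σ]
    congr 1
    apply Finset.filter_congr
    intro p _
    simp only [leftPeaks_ins n hn σ p]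
    constructor
    · intro h
      by_contra hc
      rw [if_neg hc] at h
      push_cast at h
      omega
    · intro h
      rw [if_pos h]
      exact h1
  · rw [if_neg h1]
    by_cases h2 : (leftPeaks n σ : ℤ) = k - 1
    · rw [if_pos h2]
      have : ((Finset.univ : Finset (Fin (n+1))).filter
          fun p => (leftPeaks (n+1) (ins σ p) : ℤ) = k)
          = (Finset.univ.filter fun p : Fin (n+1) => ¬ keeps n σ (p:ℕ)) := by
        apply Finset.filter_congr
        intro p _
        rw [leftPeaks_ins n hn σ p]
        constructor
        · intro h
          split_ifs at h with hk
          · exact absurd h h1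
          · simpa using hk
        · intro h
          rw [if_neg (by simpa using h)]
          push_cast
          omega
      rw [this, Finset.filter_not, Finset.card_sdiff_of_subset (Finset.filter_subset _ _),
        card_keeps n hn σ]
      simp only [Finset.card_univ, Fintype.card_fin]
      omega
    · rw [if_neg h2, Finset.card_eq_zero, Finset.filter_eq_empty_iff]
      intro p _
      rw [leftPeaks_ins n hn σ p]
      split_ifs
      · exact h1
      · push_cast
        omega

lemma ins_bijective (n : ℕ) :
    Function.Bijective (fun q : Equiv.Perm (Fin n) × Fin (n+1) => ins q.1 q.2) := by
  have key1 : ∀ (σ : Equiv.Perm (Fin n)) (p : Fin (n+1)), ins σ p p = Fin.last n := by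
    intro σ p
    simp [ins, finSuccEquiv'_at]
  have key2 : ∀ (σ : Equiv.Perm (Fin n)) (p : Fin (n+1)) (j : Fin n),
      ins σ p (p.succAbove j) = Fin.castSucc (σ j) := by
    intro σ p j
    simp [ins, finSuccEquiv'_succAbove]
  rw [Fintype.bijective_iff_injective_and_card]
  constructor
  · rintro ⟨σ, p⟩ ⟨σ', p'⟩ h
    simp only at h
    have hp : p = p' := by
      by_contra hc
      obtain ⟨j, hj⟩ := Fin.exists_succAbove_eq hc
      have h1 : ins σ p p = Fin.last n := key1 σ p
      have h2 : ins σ' p' p = Fin.castSucc (σ' j) := by rw [← hj, key2]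
      rw [h, h2] at h1
      exact (Fin.castSucc_lt_last (σ' j)).ne h1
    subst hp
    have hσ : σ = σ' := by
      apply Equiv.ext
      intro j
      have h1 := key2 σ p j
      have h2 := key2 σ' p j
      rw [h, h2] at h1
      exact (Fin.castSucc_injective n h1).symm
    rw [hσ]
  · simp [Fintype.card_perm, Fintype.card_prod, Fintype.card_fin, Nat.factorial_succ, mul_comm]

lemma lpc_eq_card (n : ℕ) (k : ℤ) :
    leftPeakCount n k
      = ((Finset.univ : Finset (Equiv.Perm (Fin n))).filter
          fun π => (leftPeaks n π : ℤ) = k).card := by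
  rw [leftPeakCount, Nat.card_eq_fintype_card, Fintype.card_subtype]

lemma lpc_vanish (n : ℕ) (hn : 1 ≤ n) (k : ℤ) (hk : ¬ (0 ≤ k ∧ 2 * k ≤ (n:ℤ))) :
    leftPeakCount n k = 0 := by
  rw [lpc_eq_card, Finset.card_eq_zero, Finset.filter_eq_empty_iff]
  intro π _
  intro hc
  have := two_lpk_le n hn π
  omega

lemma lpc_one (k : ℤ) : leftPeakCount 1 k = if k = 0 then 1 else 0 := by
  have hlp : ∀ π : Equiv.Perm (Fin 1), leftPeaks 1 π = 0 := by
    intro π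
    rw [leftPeaks_card, pkSet, show (1:ℕ)-1 = 0 from rfl, Finset.Icc_eq_empty_of_lt (by norm_num),
      Finset.filter_empty, Finset.card_empty]
  rw [lpc_eq_card]
  by_cases hk : k = 0
  · subst hk
    rw [if_pos rfl]
    have : ((Finset.univ : Finset (Equiv.Perm (Fin 1))).filter fun π => (leftPeaks 1 π : ℤ) = 0)
        = Finset.univ := by
      apply Finset.filter_true_of_mem
      intro π _
      rw [hlp π]
      norm_num
    rw [this, Finset.card_univ]
    simp
  · rw [if_neg hk, Finset.card_eq_zero, Finset.filter_eq_empty_iff]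
    intro π _
    rw [hlp π]
    intro hc
    exact hk (by omega)

lemma lpc_succ (n : ℕ) (hn : 1 ≤ n) (k : ℤ) :
    (leftPeakCount (n+1) k : ℚ)
      = (2*(k:ℚ)+1) * (leftPeakCount n k : ℚ)
        + ((n:ℚ) - 2*(k:ℚ) + 2) * (leftPeakCount n (k-1) : ℚ) := by
  have hbij := ins_bijective n
  have e1 : ((Finset.univ : Finset (Equiv.Perm (Fin (n+1)))).filter
        fun π => (leftPeaks (n+1) π : ℤ) = k).card
      = ((Finset.univ : Finset (Equiv.Perm (Fin n) × Fin (n+1))).filter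
          fun q => (leftPeaks (n+1) (ins q.1 q.2) : ℤ) = k).card := by
    refine (Finset.card_nbij (fun q => ins q.1 q.2) ?_ ?_ ?_).symm
    · intro q hq
      simp only [Finset.mem_coe, Finset.mem_filter, Finset.mem_univ, true_and] at hq ⊢
      exact hq
    · intro q _ q' _ h
      exact hbij.1 h
    · intro π hπ
      obtain ⟨q, rfl⟩ := hbij.2 π
      simp only [Finset.coe_filter, Finset.mem_univ, true_and, Set.mem_setOf_eq,
        Set.mem_image] at hπ ⊢
      exact ⟨q, hπ, rfl⟩
  have e2 : ((Finset.univ : Finset (Equiv.Perm (Fin n) × Fin (n+1))).filter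
        fun q => (leftPeaks (n+1) (ins q.1 q.2) : ℤ) = k).card
      = ∑ σ : Equiv.Perm (Fin n),
          ((Finset.univ : Finset (Fin (n+1))).filter
            fun p => (leftPeaks (n+1) (ins σ p) : ℤ) = k).card := by
    rw [Finset.card_filter, Fintype.sum_prod_type]
    refine Finset.sum_congr rfl fun σ _ => ?_
    rw [Finset.card_filter]
  rw [lpc_eq_card, e1, e2]
  rw [Nat.cast_sum]
  have e3 : ∀ σ : Equiv.Perm (Fin n),
      ((((Finset.univ : Finset (Fin (n+1))).filter
          fun p => (leftPeaks (n+1) (ins σ p) : ℤ) = k).card : ℕ) : ℚ)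
        = (if (leftPeaks n σ : ℤ) = k then 2*(k:ℚ)+1 else 0)
          + (if (leftPeaks n σ : ℤ) = k - 1 then (n:ℚ) - 2*(k:ℚ) + 2 else 0) := by
    intro σ
    rw [count_p n hn σ k]
    by_cases h1 : (leftPeaks n σ : ℤ) = k
    · rw [if_pos h1, if_pos h1, if_neg (by omega), add_zero]
      have : (leftPeaks n σ : ℚ) = (k:ℚ) := by exact_mod_cast h1
      push_cast
      linarith
    · rw [if_neg h1, if_neg h1]
      by_cases h2 : (leftPeaks n σ : ℤ) = k - 1
      · rw [if_pos h2, if_pos h2, zero_add]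
        have hle := two_lpk_le n hn σ
        have : (leftPeaks n σ : ℚ) = (k:ℚ) - 1 := by
          have := congrArg (fun t : ℤ => (t:ℚ)) h2
          push_cast at this
          exact this
        rw [Nat.cast_sub (by omega)]
        push_cast
        linarith
      · rw [if_neg h2, if_neg h2]
        norm_num
  rw [Finset.sum_congr rfl fun σ _ => e3 σ, Finset.sum_add_distrib]
  have e4 : ∀ (c : ℤ) (A : ℚ),
      (∑ σ : Equiv.Perm (Fin n), if (leftPeaks n σ : ℤ) = c then A else 0)
        = A * (leftPeakCount n c : ℚ) := by
    intro c A
    rw [lpc_eq_card, ← Finset.sum_filter, Finset.sum_const, nsmul_eq_mul, mul_comm]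
  rw [e4, e4]

lemma main_claim : ∀ n : ℕ, 1 ≤ n → ∀ i : ℕ,
    Sv n (if Even n then 2*i else 2*i+1) = (leftPeakCount n (((n/2 : ℕ) : ℤ) - (i:ℤ)) : ℚ) := by
  intro n hn
  induction n, hn using Nat.le_induction with
  | base =>
    intro i
    rw [if_neg (by decide)]
    rw [show (1:ℕ) = 0 + 1 from rfl, Sv_succ 0 (2*i+1), if_pos (by omega)]
    rw [show 2*i+1-1 = 2*i from by omega, show 2*i+1+1 = 2*i+2 from rfl, Sv_zero, Sv_zero]
    rcases Nat.eq_zero_or_pos i with rfl | hi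
    · norm_num [lpc_one]
    · rw [if_neg (by omega), if_neg (by omega), lpc_one, if_neg (by omega)]
      push_cast
      ring
  | succ n hn ih =>
    intro i
    by_cases hpar : Even n
    · -- n even, n+1 odd
      obtain ⟨m, rfl⟩ := hpar
      have hdiv : (m + m) / 2 = m := by omega
      have hdiv2 : (m + m + 1) / 2 = m := by omega
      simp only [hdiv] at ih
      rw [if_neg (by simp [Nat.even_add_one, parity_simps])]
      rw [Sv_succ (m+m) (2*i+1), if_pos (by omega)]
      have ih1 := ih i
      rw [if_pos ⟨m, rfl⟩] at ih1
      have ih2 := ih (i+1)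
      rw [if_pos ⟨m, rfl⟩] at ih2
      rw [show 2*i+1-1 = 2*i from by omega, show 2*i+1+1 = 2*(i+1) from by ring, ih1, ih2]
      rw [hdiv2, lpc_succ (m+m) (by omega) ((m : ℤ) - (i:ℤ))]
      have hidx : (m : ℤ) - (i:ℤ) - 1 = (m : ℤ) - ((i+1 : ℕ):ℤ) := by push_cast; ring
      rw [hidx]
      push_cast
      ring
    · -- n odd, n+1 even
      have hodd : Odd n := Nat.not_even_iff_odd.mp hpar
      obtain ⟨m, rfl⟩ := hodd
      have hdiv : (2*m + 1) / 2 = m := by omega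
      have hdiv2 : (2*m + 1 + 1) / 2 = m + 1 := by omega
      simp only [hdiv] at ih
      rw [if_pos (by refine ⟨m+1, by ring⟩)]
      rw [Sv_succ (2*m+1) (2*i), hdiv2]
      rw [lpc_succ (2*m+1) (by omega) (((m+1 : ℕ) : ℤ) - (i:ℤ))]
      rcases Nat.eq_zero_or_pos i with rfl | hi
      · rw [if_neg (by omega)]
        have ih0 := ih 0
        rw [if_neg (by simp [Nat.even_add_one, parity_simps])] at ih0
        rw [show 2*0+1 = 1 from rfl] at ih0
        rw [show 2*0 = 0 from rfl, show (0:ℕ)+1 = 1 from rfl, ih0]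
        have hvan : leftPeakCount (2*m+1) (((m+1 : ℕ) : ℤ) - ((0:ℕ):ℤ)) = 0 := by
          apply lpc_vanish _ (by omega)
          push_neg
          intro _
          push_cast
          omega
        have hidx : ((((m+1:ℕ)) : ℤ) - ((0:ℕ):ℤ)) - 1 = (m : ℤ) - ((0:ℕ):ℤ) := by
          push_cast
          ring
        rw [hvan, hidx]
        push_cast
        ring
      · rw [if_pos (by omega)]
        have ih1 := ih (i-1)
        rw [if_neg (by simp [Nat.even_add_one, parity_simps])] at ih1
        have ih2 := ih i
        rw [if_neg (by simp [Nat.even_add_one, parity_simps])] at ih2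
        rw [show 2*i-1 = 2*(i-1)+1 from by omega, ih1, ih2]
        have hidx1 : (((m+1:ℕ)) : ℤ) - (i:ℤ) = (m : ℤ) - ((i-1 : ℕ):ℤ) := by
          have : ((i-1 : ℕ):ℤ) = (i:ℤ) - 1 := by omega
          rw [this]
          push_cast
          ring
        have hidx2 : ((((m+1:ℕ)) : ℤ) - (i:ℤ)) - 1 = (m : ℤ) - (i:ℤ) := by
          push_cast
          ring
        rw [hidx2, hidx1]
        have hci : ((i-1 : ℕ):ℚ) = (i:ℚ) - 1 := by
          have : ((i-1 : ℕ):ℤ) = (i:ℤ) - 1 := by omega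
          exact_mod_cast this
        push_cast [hci]
        ring

theorem stmt12 (n : ℕ) (hn : 1 ≤ n) (i : ℕ) :
    ∑ j ∈ Finset.range (n+1), tC n (i:ℤ) (j:ℤ)
      = (leftPeakCount n (((n/2 : ℕ) : ℤ) - (i:ℤ)) : ℚ) := by
  rw [sum_tC_eq_Sv n i, main_claim n hn i]
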